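/- For 0 < q < 1, the double series f₂(z) = ∑_{2l=1}^∞ ∑_{n ∈ J_l} (2l+1) q^{2l-n} (1 + λ_{l,n}^2)^{-z/2} converges absolutely for every complex z with Re(z) > 2, where J_l and λ_{l,n} are as in the standard SU_q(2) setup. -/

import Mathlib

noncomputable def qnum (q a : ℝ) : ℝ := (q ^ (-a) - q ^ a) / (q⁻¹ - q)

noncomputable def lamSq (q l n : ℝ) : ℝ :=
  (n / 2) ^ 2 + q ^ n * ((qnum q (l + 1 / 2)) ^ 2 - (qnum q (n / 2)) ^ 2)

/-- Index set: pairs `(L, n)` with `L = 2l ≥ 1`, `0 ≤ n ≤ 2l - 1` and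
`n ≡ 2l - 1 (mod 2)`, i.e. `n ∈ J_l`. -/
def Jidx : Set (ℕ × ℕ) := {p | 1 ≤ p.1 ∧ p.2 + 1 ≤ p.1 ∧ (p.1 - 1 - p.2) % 2 = 0}

lemma qnum_denom_pos {q : ℝ} (hq0 : 0 < q) (hq1 : q < 1) : 0 < q⁻¹ - q := by
  have h1 : 1 < q⁻¹ := (one_lt_inv₀ hq0).mpr hq1
  linarith

lemma qnum_mono {q : ℝ} (hq0 : 0 < q) (hq1 : q < 1) {a b : ℝ} (hab : a ≤ b) :
    qnum q a ≤ qnum q b := by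
  unfold qnum
  have hd := qnum_denom_pos hq0 hq1
  have h1 : q ^ (-a) ≤ q ^ (-b) :=
    Real.rpow_le_rpow_of_exponent_ge hq0 hq1.le (by linarith)
  have h2 : q ^ b ≤ q ^ a :=
    Real.rpow_le_rpow_of_exponent_ge hq0 hq1.le hab
  gcongr

lemma qnum_nonneg {q : ℝ} (hq0 : 0 < q) (hq1 : q < 1) {a : ℝ} (ha : 0 ≤ a) :
    0 ≤ qnum q a := by
  unfold qnum
  have hd := qnum_denom_pos hq0 hq1
  have h1 : q ^ a ≤ q ^ (-a) :=
    Real.rpow_le_rpow_of_exponent_ge hq0 hq1.le (by linarith)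
  exact div_nonneg (by linarith) hd.le

lemma lamSq_lower {q : ℝ} (hq0 : 0 < q) (hq1 : q < 1) {L n : ℕ} (hn : n + 1 ≤ L) :
    ((n : ℝ) + 1) ^ 2 / 8 ≤ 1 + lamSq q ((L : ℝ) / 2) (n : ℝ) := by
  have hmono : qnum q ((n : ℝ) / 2) ≤ qnum q ((L : ℝ) / 2 + 1 / 2) := by
    apply qnum_mono hq0 hq1
    have : (n : ℝ) ≤ (L : ℝ) := by exact_mod_cast Nat.le_of_succ_le hn
    linarith
  have hnn : 0 ≤ qnum q ((n : ℝ) / 2) := qnum_nonneg hq0 hq1 (by positivity)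
  have hsq : qnum q ((n : ℝ) / 2) ^ 2 ≤ qnum q ((L : ℝ) / 2 + 1 / 2) ^ 2 :=
    pow_le_pow_left₀ hnn hmono 2
  have hqn : (0 : ℝ) ≤ q ^ (n : ℝ) := (Real.rpow_pos_of_pos hq0 _).le
  have h2 : 0 ≤ q ^ (n : ℝ) * ((qnum q ((L : ℝ) / 2 + 1 / 2)) ^ 2 - (qnum q ((n : ℝ) / 2)) ^ 2) :=
    mul_nonneg hqn (by linarith)
  unfold lamSq
  nlinarith [sq_nonneg ((n : ℝ) - 1)]

theorem stmt6 (q : ℝ) (hq0 : 0 < q) (hq1 : q < 1) (z : ℂ) (hz : 2 < z.re) :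
    Summable (fun p : Jidx =>
      ‖((((p.1.1 : ℝ) + 1) * q ^ ((p.1.1 : ℝ) - (p.1.2 : ℝ)) : ℝ) : ℂ) *
        ((1 + lamSq q ((p.1.1 : ℝ) / 2) (p.1.2 : ℝ) : ℝ) : ℂ) ^ (-z / 2)‖) := by
  set s := z.re with hsdef
  -- summable majorant pieces
  have hq' : ‖q‖ < 1 := by rw [Real.norm_eq_abs, abs_of_pos hq0]; exact hq1
  have hgeo : Summable (fun k : ℕ => (k : ℝ) * q ^ k) := by
    simpa using summable_pow_mul_geometric_of_norm_lt_one 1 hq'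
  have hgeo0 : Summable (fun k : ℕ => q ^ k) := summable_geometric_of_lt_one hq0.le hq1
  have h2 : Summable (fun k : ℕ => ((k : ℝ) + 2) * q ^ (k + 1)) := by
    have := (hgeo.mul_left q).add (hgeo0.mul_left (2 * q))
    apply this.congr
    intro k
    ring
  have h1 : Summable (fun n : ℕ => ((n : ℝ) + 1) ^ (1 - s)) := by
    have h := Real.summable_nat_rpow.mpr (show (1 : ℝ) - s < -1 by linarith)
    have := (summable_nat_add_iff 1).mpr h
    apply this.congr
    intro n
    push_cast
    rfl
  have h3 : Summable (fun x : ℕ × ℕ =>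
      ((x.1 : ℝ) + 1) ^ (1 - s) * (((x.2 : ℝ) + 2) * q ^ (x.2 + 1))) := by
    apply Summable.mul_of_nonneg h1 h2
    · intro n; positivity
    · intro k; positivity
  -- injection from Jidx
  have he : Function.Injective (fun p : Jidx => (p.1.2, p.1.1 - p.1.2 - 1)) := by
    intro a b hpq
    have h2 : a.1.2 = b.1.2 := congrArg Prod.fst hpq
    have h1 : a.1.1 - a.1.2 - 1 = b.1.1 - b.1.2 - 1 := congrArg Prod.snd hpq
    have ha : a.1.2 + 1 ≤ a.1.1 := a.2.2.1
    have hb : b.1.2 + 1 ≤ b.1.1 := b.2.2.1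
    exact Subtype.ext (Prod.ext (by omega) (by omega))
  have hmaj := (h3.comp_injective he).mul_left ((8 : ℝ) ^ (s / 2))
  apply Summable.of_nonneg_of_le (fun p => norm_nonneg _) ?_ hmaj
  rintro ⟨⟨L, n⟩, hmem⟩
  obtain ⟨hL1, hnL, -⟩ := hmem
  simp only [Function.comp_apply]
  set k := L - n - 1 with hk
  have hLnk : L = n + k + 1 := by omega
  set x := 1 + lamSq q ((L : ℝ) / 2) (n : ℝ) with hx
  set A := (n : ℝ) + 1 with hA
  have hA0 : 0 < A := by positivity
  have hx8 : A ^ 2 / 8 ≤ x := lamSq_lower hq0 hq1 hnL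
  have hx0 : 0 < x := lt_of_lt_of_le (by positivity) hx8
  -- rewrite the rpow exponent as a nat
  have hexp : q ^ ((L : ℝ) - (n : ℝ)) = q ^ (k + 1) := by
    rw [show (L : ℝ) - (n : ℝ) = ((k + 1 : ℕ) : ℝ) by push_cast [hLnk]; ring,
      Real.rpow_natCast]
  -- norm computation
  have hre : (-z / 2).re = -s / 2 := by
    rw [show (-z / 2) = -z / ((2 : ℝ) : ℂ) by norm_num, Complex.div_ofReal_re,
      Complex.neg_re]
  have hnorm : ‖((((L : ℝ) + 1) * q ^ ((L : ℝ) - (n : ℝ)) : ℝ) : ℂ) *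
      ((x : ℝ) : ℂ) ^ (-z / 2)‖ =
      (((L : ℝ) + 1) * q ^ (k + 1)) * x ^ (-s / 2) := by
    rw [norm_mul, Complex.norm_real,
      Complex.norm_cpow_eq_rpow_re_of_pos hx0, hre, Real.norm_eq_abs,
      abs_of_nonneg (by positivity), hexp]
  rw [hnorm]
  -- bound x ^ (-s/2)
  have hxb : x ^ (-s / 2) ≤ (A ^ 2 / 8) ^ (-s / 2) :=
    Real.rpow_le_rpow_of_nonpos (by positivity) hx8 (by linarith)
  have heq8 : ((A ^ 2 / 8 : ℝ)) ^ (-s / 2) = (8 : ℝ) ^ (s / 2) * A ^ (-s) := by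
    rw [Real.div_rpow (by positivity) (by norm_num), ← Real.rpow_natCast A 2,
      ← Real.rpow_mul hA0.le,
      show ((2 : ℕ) : ℝ) * (-s / 2) = -s by push_cast; ring,
      show (-s / 2) = -(s / 2) by ring, Real.rpow_neg (by norm_num : (0 : ℝ) ≤ 8),
      mul_comm]
    field_simp
  have hA1s : A ^ (1 - s) = A * A ^ (-s) := by
    rw [show (1 - s) = 1 + (-s) by ring, Real.rpow_add hA0, Real.rpow_one]
  have hkey : ((L : ℝ) + 1) ≤ A * ((k : ℝ) + 2) := by
    have : (L : ℝ) = (n : ℝ) + (k : ℝ) + 1 := by exact_mod_cast hLnk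
    rw [this, hA]
    nlinarith [Nat.cast_nonneg (α := ℝ) n, Nat.cast_nonneg (α := ℝ) k]
  have hpos : (0 : ℝ) ≤ q ^ (k + 1) * ((8 : ℝ) ^ (s / 2) * A ^ (-s)) := by positivity
  have := mul_le_mul_of_nonneg_right hkey hpos
  calc ((L : ℝ) + 1) * q ^ (k + 1) * x ^ (-s / 2)
      ≤ ((L : ℝ) + 1) * q ^ (k + 1) * ((8 : ℝ) ^ (s / 2) * A ^ (-s)) := by
        rw [← heq8]
        have hq1' : 0 ≤ ((L : ℝ) + 1) * q ^ (k + 1) := by positivity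
        exact mul_le_mul_of_nonneg_left hxb hq1'
    _ ≤ A * ((k : ℝ) + 2) * ((8 : ℝ) ^ (s / 2) * A ^ (-s)) * q ^ (k + 1) := by
        nlinarith [this]
    _ = (8 : ℝ) ^ (s / 2) * (A ^ (1 - s) * (((k : ℝ) + 2) * q ^ (k + 1))) := by
        rw [hA1s]; ring
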